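/- Let n ≥ 2, let b₁ > b₂ > ⋯ > bₙ be real numbers, and let D = {λ ∈ ℝⁿ : λ¹ > b₁ > λ² > b₂ > ⋯ > b_{n−1} > λⁿ > bₙ}. Define a(x) = 4∏_{k=1}^{n}(x − bₖ) and the diagonal metric on D with Hᵢ² = ∏_{j≠i}(λⁱ − λʲ)/a(λⁱ) (which is positive on D), h = H₁⋯Hₙ, Δψ = h⁻¹ ∑ᵢ ∂ᵢ((h/Hᵢ²)∂ᵢψ). Let v₁,…,vₙ : ℝ → ℝ be continuous and V(λ) = ∑_{i=1}^{n} vᵢ(λⁱ)/∏_{j≠i}(λⁱ − λʲ). Let k, k₀, k₁, …, k_{n−2} be real constants, set J₁ = (b₁, ∞) and Jᵢ = (bᵢ, b_{i−1}) for 2 ≤ i ≤ n, and suppose φᵢ : Jᵢ → ℝ are C² and satisfy φᵢ''(x) + (a'(x)/(2a(x)))φᵢ'(x) + (1/a(x))[∑_{m=0}^{n−2} kₘ xᵐ + k² x^{n−1} − vᵢ(x)]φᵢ(x) = 0. Then ψ(λ) = ∏_{i=1}^{n} φᵢ(λⁱ) satisfies Δψ + (k² − V)ψ = 0 on D. -/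

import Mathlib

/-- The partial derivative of `f : ℝⁿ → ℝ` in the `i`-th coordinate direction,
taken as a line (directional) derivative. -/
noncomputable def pd {n : ℕ} (i : Fin n) (f : (Fin n → ℝ) → ℝ) (x : Fin n → ℝ) : ℝ :=
  lineDeriv ℝ f x (Pi.single i 1)


open Polynomial Finset in
lemma lag_monomial {n : ℕ} (l : Fin n → ℝ) (hinj : Function.Injective l) (m : ℕ) (hm : m < n) :
    ∑ i, (l i) ^ m * (∏ j ∈ Finset.univ.erase i, (l i - l j))⁻¹
      = if m = n - 1 then 1 else 0 := by
  have hdeg : ((X : ℝ[X]) ^ m).degree < (#(univ : Finset (Fin n)) : ℕ) := by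
    simpa [degree_X_pow] using (by exact_mod_cast hm : ((m : ℕ) : WithBot ℕ) < (n : WithBot ℕ))
  have key := Lagrange.eq_interpolate (s := (univ : Finset (Fin n))) (v := l)
    hinj.injOn hdeg
  have key2 := congrArg (fun p : ℝ[X] => p.coeff (n - 1)) key
  simp only [Lagrange.interpolate_apply, finset_sum_coeff, coeff_C_mul, coeff_X_pow,
    eval_pow, eval_X] at key2
  have hbasis : ∀ i : Fin n, (Lagrange.basis univ l i).coeff (n - 1)
      = (∏ j ∈ Finset.univ.erase i, (l i - l j))⁻¹ := by
    intro i
    have hcard : #(univ.erase i) = n - 1 := by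
      rw [Finset.card_erase_of_mem (mem_univ i), Finset.card_univ, Fintype.card_fin]
    have hmonic : (∏ j ∈ univ.erase i, (X - C (l j))).Monic :=
      monic_prod_of_monic _ _ fun j _ => monic_X_sub_C (l j)
    have hnd : (∏ j ∈ univ.erase i, (X - C (l j))).natDegree = n - 1 := by
      rw [natDegree_prod_of_monic _ _ fun j _ => monic_X_sub_C (l j)]
      simp [hcard]
    have hlead : (∏ j ∈ univ.erase i, (X - C (l j))).coeff (n - 1) = 1 := by
      rw [← hnd]; exact hmonic.coeff_natDegree
    calc (Lagrange.basis univ l i).coeff (n - 1)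
        = ((∏ j ∈ univ.erase i, C ((l i - l j)⁻¹)) *
            ∏ j ∈ univ.erase i, (X - C (l j))).coeff (n - 1) := by
          rw [Lagrange.basis, ← Finset.prod_mul_distrib]
          rfl
      _ = (∏ j ∈ univ.erase i, (l i - l j)⁻¹) *
            (∏ j ∈ univ.erase i, (X - C (l j))).coeff (n - 1) := by
          rw [← map_prod, coeff_C_mul]
      _ = (∏ j ∈ Finset.univ.erase i, (l i - l j))⁻¹ := by
          rw [hlead, mul_one, Finset.prod_inv_distrib]
  simp only [hbasis] at key2
  rw [← key2]
  by_cases hc : m = n - 1 <;> simp [hc, eq_comm]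

lemma sqrt_finset_prod {ι : Type*} (s : Finset ι) (f : ι → ℝ) (h : ∀ j ∈ s, 0 ≤ f j) :
    Real.sqrt (∏ j ∈ s, f j) = ∏ j ∈ s, Real.sqrt (f j) := by
  induction s using Finset.cons_induction with
  | empty => simp
  | cons a s ha ih =>
    rw [Finset.prod_cons, Finset.prod_cons,
      Real.sqrt_mul (h a (Finset.mem_cons_self a s)),
      ih fun j hj => h j (Finset.mem_cons_of_mem hj)]

/-- **Separability of the n-elliptic metric in the Schrödinger equation.** On the domain
`D = {λ : λ¹ > b₁ > λ² > ⋯ > b_{n-1} > λⁿ > bₙ}`, with `a(x) = 4∏ₖ(x - bₖ)`,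
`Hᵢ² = ∏_{j≠i}(λⁱ - λʲ)/a(λⁱ)`, `h = H₁⋯Hₙ`, and potential
`V(λ) = ∑ᵢ vᵢ(λⁱ)/∏_{j≠i}(λⁱ - λʲ)`: whenever the `φᵢ` are `C²` on the intervals
`Jᵢ` and satisfy the separation equations
`φᵢ'' + (a'/(2a))φᵢ' + (1/a)[∑ₘ kₘ xᵐ + k² x^{n-1} - vᵢ]φᵢ = 0`, the product
`ψ(λ) = ∏ᵢ φᵢ(λⁱ)` satisfies `Δψ + (k² - V)ψ = 0` on `D`. -/
theorem elliptic_metric_separable (n : ℕ) (hn : 2 ≤ n)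
    (b : Fin n → ℝ) (hb : StrictAnti b)
    (D : Set (Fin n → ℝ))
    (hD : D = {l | (∀ i, b i < l i) ∧ ∀ i j : Fin n, i < j → l j < b i})
    (a : ℝ → ℝ) (ha : ∀ x, a x = 4 * ∏ k, (x - b k))
    (H2 : Fin n → (Fin n → ℝ) → ℝ)
    (hH2 : ∀ i l, H2 i l = (∏ j ∈ Finset.univ.erase i, (l i - l j)) / a (l i))
    (h : (Fin n → ℝ) → ℝ) (hh : ∀ l, h l = ∏ i, Real.sqrt (H2 i l))
    (v : Fin n → ℝ → ℝ) (hv : ∀ i, Continuous (v i))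
    (V : (Fin n → ℝ) → ℝ)
    (hV : ∀ l, V l = ∑ i : Fin n, v i (l i) / ∏ j ∈ Finset.univ.erase i, (l i - l j))
    (k : ℝ) (kc : ℕ → ℝ)
    (J : Fin n → Set ℝ) (hJ : ∀ i, J i = {x | b i < x ∧ ∀ j, j < i → x < b j})
    (φ : Fin n → ℝ → ℝ) (hφ : ∀ i, ContDiffOn ℝ 2 (φ i) (J i))
    (hode : ∀ i, ∀ x ∈ J i,
      deriv (deriv (φ i)) x + deriv a x / (2 * a x) * deriv (φ i) x
        + (1 / a x) * ((∑ m ∈ Finset.range (n - 1), kc m * x ^ m)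
            + k ^ 2 * x ^ (n - 1) - v i x) * φ i x = 0)
    (ψ : (Fin n → ℝ) → ℝ) (hψ : ∀ l, ψ l = ∏ i, φ i (l i)) :
    ∀ l ∈ D,
      (h l)⁻¹ * ∑ i, pd i (fun w => h w / H2 i w * pd i ψ w) l
        + (k ^ 2 - V l) * ψ l = 0 := by
  classical
  -- basic facts
  have hJopen : ∀ i : Fin n, IsOpen (J i) := by
    intro i
    rw [hJ]
    have hset : {x : ℝ | b i < x ∧ ∀ j, j < i → x < b j}
        = Set.Ioi (b i) ∩ ⋂ j : Fin n, {x | j < i → x < b j} := by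
      ext x; simp [Set.mem_iInter]
    rw [hset]
    refine isOpen_Ioi.inter (isOpen_iInter_of_finite fun j => ?_)
    by_cases hj : j < i
    · simp only [hj, true_implies]; exact isOpen_Iio
    · simp only [hj, false_implies, Set.setOf_true]; exact isOpen_univ
  have haxne : ∀ (i : Fin n), ∀ x ∈ J i, a x ≠ 0 := by
    intro i x hx
    rw [hJ] at hx
    rw [ha x]
    refine mul_ne_zero (by norm_num) (Finset.prod_ne_zero_iff.2 fun c _ => sub_ne_zero.2 ?_)
    rcases lt_trichotomy c i with hc | hc | hc
    · exact ne_of_lt (hx.2 c hc)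
    · subst hc; exact ne_of_gt hx.1
    · exact ne_of_gt ((hb hc).trans hx.1)
  have hH2pos : ∀ w : Fin n → ℝ, (∀ i, b i < w i) → (∀ i j : Fin n, i < j → w j < b i) →
      ∀ j, 0 < H2 j w := by
    intro w hw1 hw2 j
    have hpairs : ∀ m ∈ Finset.univ.erase j, 0 < (w j - w m) * (w j - b m) := by
      intro m hm
      have hmj : m ≠ j := (Finset.mem_erase.1 hm).1
      rcases lt_or_gt_of_ne hmj with hlt | hgt
      · have h1 : w j < b m := hw2 m j hlt
        have h2 : b m < w m := hw1 m
        exact mul_pos_of_neg_of_neg (by linarith) (by linarith)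
      · have h1 : w m < b j := hw2 j m hgt
        have h2 : b j < w j := hw1 j
        have h3 : b m < b j := hb hgt
        exact mul_pos (by linarith) (by linarith)
    have hnd : (∏ m ∈ Finset.univ.erase j, (w j - w m)) * a (w j)
        = 4 * (w j - b j) * ∏ m ∈ Finset.univ.erase j, ((w j - w m) * (w j - b m)) := by
      rw [ha, ← Finset.mul_prod_erase Finset.univ (fun m => w j - b m) (Finset.mem_univ j),
        Finset.prod_mul_distrib]
      ring
    have hpos : 0 < (∏ m ∈ Finset.univ.erase j, (w j - w m)) * a (w j) := by
      rw [hnd]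
      exact mul_pos (mul_pos (by norm_num) (by linarith [hw1 j])) (Finset.prod_pos hpairs)
    have hane : a (w j) ≠ 0 := by
      intro h0; rw [h0, mul_zero] at hpos; exact lt_irrefl 0 hpos
    have := div_pos hpos (mul_self_pos.2 hane)
    rw [mul_div_mul_right _ _ hane] at this
    rw [hH2]
    exact this
  intro l hlD
  rw [hD] at hlD
  obtain ⟨hlb, hlo⟩ := hlD
  have hlJ : ∀ i, l i ∈ J i := by
    intro i; rw [hJ]; exact ⟨hlb i, fun j hj => hlo j i hj⟩
  have hlanti : StrictAnti l := fun p q hpq => (hlo p q hpq).trans (hlb p)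
  have hlinj : Function.Injective l := hlanti.injective
  have hlpos : ∀ j, 0 < H2 j l := hH2pos l hlb hlo
  have hhl_pos : 0 < h l := by
    rw [hh]; exact Finset.prod_pos fun j _ => Real.sqrt_pos.2 (hlpos j)
  -- the key per-coordinate computation
  have key : ∀ i : Fin n, pd i (fun w => h w / H2 i w * pd i ψ w) l
      = h l * (-((((∑ m ∈ Finset.range (n - 1), kc m * (l i) ^ m)
          + k ^ 2 * (l i) ^ (n - 1) - v i (l i))
            / ∏ j ∈ Finset.univ.erase i, (l i - l j)) * ψ l)) := by
    intro i
    set y := l i with hy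
    have hyJ : y ∈ J i := hlJ i
    set P : ℝ := ∏ j ∈ Finset.univ.erase i, φ j (l j) with hP
    -- update stays in the domain
    have hupd : ∀ x ∈ J i, (∀ j, b j < Function.update l i x j)
        ∧ (∀ j j' : Fin n, j < j' → Function.update l i x j' < b j) := by
      intro x hx
      rw [hJ] at hx
      constructor
      · intro j
        by_cases hj : j = i
        · subst hj; simpa using hx.1
        · rw [Function.update_of_ne hj]; exact hlb j
      · intro j j' hjj'
        by_cases hj : j' = i
        · subst hj; rw [Function.update_self]; exact hx.2 j hjj'
        · rw [Function.update_of_ne hj]; exact hlo j j' hjj'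
    -- coordinates of l + t • eᵢ
    have hline : ∀ t : ℝ, l + t • (Pi.single i 1 : Fin n → ℝ) = Function.update l i (y + t) := by
      intro t; funext j
      by_cases hj : j = i
      · subst hj; simp [hy]
      · simp [Function.update_of_ne hj, Pi.single_eq_of_ne hj]
    have hline' : ∀ (x t : ℝ),
        Function.update l i x + t • (Pi.single i 1 : Fin n → ℝ) = Function.update l i (x + t) := by
      intro x t; funext j
      by_cases hj : j = i
      · subst hj; simp
      · simp [Function.update_of_ne hj, Pi.single_eq_of_ne hj]
    -- ψ on the line
    have hψu : ∀ x : ℝ, ψ (Function.update l i x) = φ i x * P := by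
      intro x
      rw [hψ, ← Finset.mul_prod_erase Finset.univ _ (Finset.mem_univ i),
        Function.update_self]
      congr 1
      exact Finset.prod_congr rfl fun j hj =>
        by rw [Function.update_of_ne (Finset.mem_erase.1 hj).1]
    -- φ i is differentiable on J i, and its derivative too
    have hdφ : ∀ x ∈ J i, HasDerivAt (φ i) (deriv (φ i) x) x := by
      intro x hx
      exact (((hφ i).differentiableOn (by norm_num)).differentiableAt
        ((hJopen i).mem_nhds hx)).hasDerivAt
    have hddφ : HasDerivAt (deriv (φ i)) (deriv (deriv (φ i)) y) y := by
      have h1 : ContDiffOn ℝ 1 (deriv (φ i)) (J i) :=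
        (hφ i).deriv_of_isOpen (hJopen i) (by norm_num)
      exact ((h1.differentiableOn (by norm_num)).differentiableAt
        ((hJopen i).mem_nhds hyJ)).hasDerivAt
    -- pd of ψ on the line
    have hpdψ : ∀ x ∈ J i, pd i ψ (Function.update l i x) = deriv (φ i) x * P := by
      intro x hx
      have hfun : (fun t : ℝ => ψ (Function.update l i x + t • (Pi.single i 1 : Fin n → ℝ)))
          = fun t : ℝ => φ i (x + t) * P := by
        funext t; rw [hline' x t, hψu]
      have h0 : HasDerivAt (fun t : ℝ => x + t) 1 0 := by
        simpa using (hasDerivAt_id (0 : ℝ)).const_add x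
      have hφx : HasDerivAt (φ i) (deriv (φ i) x) ((fun t : ℝ => x + t) 0) := by
        simpa using hdφ x hx
      have hcomp : HasDerivAt (fun t : ℝ => φ i (x + t) * P)
          (deriv (φ i) x * 1 * P) 0 := (hφx.comp 0 h0).mul_const P
      rw [pd, lineDeriv, hfun, hcomp.deriv, mul_one]
    -- the auxiliary quantities
    set E : Fin n → ℝ := fun j => ∏ m ∈ (Finset.univ.erase j).erase i, (l j - l m) with hE
    set C : ℝ := (-1 : ℝ) ^ (n - 1) * (∏ j ∈ Finset.univ.erase i, E j)
        / (∏ j ∈ Finset.univ.erase i, a (l j)) with hC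
    have hcard : (Finset.univ.erase (α := Fin n) i).card = n - 1 := by
      rw [Finset.card_erase_of_mem (Finset.mem_univ i), Finset.card_univ, Fintype.card_fin]
    -- coordinates of J
    have hJco : ∀ x ∈ J i, ∀ j ∈ Finset.univ.erase i, x - l j ≠ 0 := by
      intro x hx j hj
      rw [hJ] at hx
      have hji : j ≠ i := (Finset.mem_erase.1 hj).1
      rcases lt_or_gt_of_ne hji with hlt | hgt
      · exact sub_ne_zero.2 (ne_of_lt ((hx.2 j hlt).trans (hlb j)))
      · exact sub_ne_zero.2 (ne_of_gt ((hlo i j hgt).trans hx.1))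
    -- H2 at updated points
    have hH2j : ∀ (x : ℝ), ∀ j ∈ Finset.univ.erase i,
        H2 j (Function.update l i x) = (l j - x) * E j / a (l j) := by
      intro x j hj
      have hji : j ≠ i := (Finset.mem_erase.1 hj).1
      rw [hH2, Function.update_of_ne hji]
      congr 1
      have hiej : i ∈ Finset.univ.erase j := Finset.mem_erase.2 ⟨Ne.symm hji, Finset.mem_univ i⟩
      rw [← Finset.mul_prod_erase _ _ hiej, Function.update_self]
      congr 1
      exact Finset.prod_congr rfl fun m hm =>
        by rw [Function.update_of_ne (Finset.mem_erase.1 hm).1]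
    have hH2i : ∀ x : ℝ, H2 i (Function.update l i x)
        = (∏ j ∈ Finset.univ.erase i, (x - l j)) / a x := by
      intro x
      rw [hH2, Function.update_self]
      congr 1
      exact Finset.prod_congr rfl fun j hj =>
        by rw [Function.update_of_ne (Finset.mem_erase.1 hj).1]
    -- the ratio identity
    have hratio : ∀ x ∈ J i,
        (∏ j ∈ Finset.univ.erase i, H2 j (Function.update l i x))
          / H2 i (Function.update l i x) = C * a x := by
      intro x hx
      rw [Finset.prod_congr rfl (hH2j x), hH2i]
      rw [Finset.prod_div_distrib, Finset.prod_mul_distrib]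
      have hsgn : ∏ j ∈ Finset.univ.erase i, (l j - x)
          = (-1 : ℝ) ^ (n - 1) * ∏ j ∈ Finset.univ.erase i, (x - l j) := by
        rw [show (∏ j ∈ Finset.univ.erase i, (l j - x))
            = ∏ j ∈ Finset.univ.erase i, ((-1) * (x - l j)) from
          Finset.prod_congr rfl fun j _ => by ring]
        rw [Finset.prod_mul_distrib, Finset.prod_const, hcard]
      rw [hsgn, hC]
      have hπ : (∏ j ∈ Finset.univ.erase i, (x - l j)) ≠ 0 :=
        Finset.prod_ne_zero_iff.2 (hJco x hx)
      have hap : (∏ j ∈ Finset.univ.erase i, a (l j)) ≠ 0 :=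
        Finset.prod_ne_zero_iff.2 fun j _ => haxne j (l j) (hlJ j)
      have hax : a x ≠ 0 := haxne i x hx
      field_simp
    -- positivity along the line
    have hCapos : ∀ x ∈ J i, 0 < C * a x := by
      intro x hx
      rw [← hratio x hx]
      obtain ⟨hw1, hw2⟩ := hupd x hx
      exact div_pos (Finset.prod_pos fun j _ => hH2pos _ hw1 hw2 j) (hH2pos _ hw1 hw2 i)
    -- the square-root identity
    have hsqrt : ∀ x ∈ J i, h (Function.update l i x) / H2 i (Function.update l i x)
        = Real.sqrt (C * a x) := by
      intro x hx
      obtain ⟨hw1, hw2⟩ := hupd x hx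
      have hwpos : ∀ j, 0 < H2 j (Function.update l i x) := hH2pos _ hw1 hw2
      have hsplit : ∏ j, H2 j (Function.update l i x)
          = (H2 i (Function.update l i x) * H2 i (Function.update l i x))
            * ((∏ j ∈ Finset.univ.erase i, H2 j (Function.update l i x))
              / H2 i (Function.update l i x)) := by
        rw [← Finset.mul_prod_erase Finset.univ _ (Finset.mem_univ i)]
        field_simp [ne_of_gt (hwpos i)]
      rw [hh, ← sqrt_finset_prod _ _ (fun j _ => le_of_lt (hwpos j)), hsplit,
        Real.sqrt_mul (mul_self_nonneg _), Real.sqrt_mul_self (le_of_lt (hwpos i)),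
        hratio x hx]
      rw [mul_div_cancel_left₀ _ (ne_of_gt (hwpos i))]
    -- the function along the line
    have hG : ∀ x ∈ J i, h (Function.update l i x) / H2 i (Function.update l i x)
          * pd i ψ (Function.update l i x)
        = Real.sqrt (C * a x) * (deriv (φ i) x * P) := by
      intro x hx
      rw [hsqrt x hx, hpdψ x hx]
    -- differentiability of a
    have hadiff : ∀ x : ℝ, HasDerivAt a (deriv a x) x := by
      have hda : Differentiable ℝ a := by
        rw [funext ha]
        exact Differentiable.const_mul
          (fun x => DifferentiableAt.fun_finsetProd fun c _ =>
            differentiableAt_id.sub (differentiableAt_const _)) 4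
      exact fun x => (hda x).hasDerivAt
    -- derivative of the product along the line
    have hsq : HasDerivAt (fun x : ℝ => Real.sqrt (C * a x))
        (C * deriv a y / (2 * Real.sqrt (C * a y))) y :=
      ((hadiff y).const_mul C).sqrt (ne_of_gt (hCapos y hyJ))
    have hF : HasDerivAt (fun x : ℝ => Real.sqrt (C * a x) * (deriv (φ i) x * P))
        (C * deriv a y / (2 * Real.sqrt (C * a y)) * (deriv (φ i) y * P)
          + Real.sqrt (C * a y) * (deriv (deriv (φ i)) y * P)) y :=
      hsq.mul (hddφ.mul_const P)
    -- compute the line derivative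
    have hpdG : pd i (fun w => h w / H2 i w * pd i ψ w) l
        = C * deriv a y / (2 * Real.sqrt (C * a y)) * (deriv (φ i) y * P)
          + Real.sqrt (C * a y) * (deriv (deriv (φ i)) y * P) := by
      have hev : ∀ᶠ t in nhds (0 : ℝ), y + t ∈ J i := by
        have hc : ContinuousAt (fun t : ℝ => y + t) 0 := by fun_prop
        have := hc.preimage_mem_nhds ((hJopen i).mem_nhds (by simpa using hyJ))
        exact this
      have heq : (fun t : ℝ => (fun w => h w / H2 i w * pd i ψ w) (l + t • (Pi.single i 1 : Fin n → ℝ)))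
          =ᶠ[nhds (0 : ℝ)] fun t => Real.sqrt (C * a (y + t)) * (deriv (φ i) (y + t) * P) := by
        filter_upwards [hev] with t ht
        rw [hline t]
        exact hG (y + t) ht
      have h0 : HasDerivAt (fun t : ℝ => y + t) 1 0 := by
        simpa using (hasDerivAt_id (0 : ℝ)).const_add y
      rw [pd, lineDeriv, heq.deriv_eq,
        deriv_comp_const_add (fun x : ℝ => Real.sqrt (C * a x) * (deriv (φ i) x * P)) y 0,
        add_zero]
      exact hF.deriv
    rw [hpdG]
    -- final algebra using the ODE
    set s : ℝ := Real.sqrt (C * a y) with hs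
    have hspos : 0 < s := Real.sqrt_pos.2 (hCapos y hyJ)
    have hs2 : s * s = C * a y := Real.mul_self_sqrt (le_of_lt (hCapos y hyJ))
    have hayne : a y ≠ 0 := haxne i y hyJ
    have hπy : (∏ j ∈ Finset.univ.erase i, (y - l j)) ≠ 0 :=
      Finset.prod_ne_zero_iff.2 (hJco y hyJ)
    have hH2l : H2 i l = (∏ j ∈ Finset.univ.erase i, (y - l j)) / a y := hH2 i l
    have hhl : h l = (∏ j ∈ Finset.univ.erase i, (y - l j)) / a y * s := by
      have h9 := hsqrt y hyJ
      rw [Function.update_eq_self, ← hs, div_eq_iff (ne_of_gt (hlpos i))] at h9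
      rw [← hH2l, h9]
      ring
    have hψl : ψ l = φ i y * P := by
      have := hψu y
      rwa [Function.update_eq_self] at this
    have hodei := hode i y hyJ
    have hddφy : deriv (deriv (φ i)) y
        = -(deriv a y / (2 * a y) * deriv (φ i) y
          + 1 / a y * ((∑ m ∈ Finset.range (n - 1), kc m * y ^ m)
              + k ^ 2 * y ^ (n - 1) - v i y) * φ i y) := by
      linarith [hodei]
    have hCda : C * deriv a y / (2 * s) = s * deriv a y / (2 * a y) := by
      rw [div_eq_div_iff (by positivity) (by simpa using mul_ne_zero two_ne_zero hayne)]
      linear_combination (-2 * deriv a y) * hs2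
    rw [hCda, hddφy, hhl, hψl]
    field_simp
    ring

  -- Lagrange interpolation identity
  have hsum : ∑ i, ((∑ m ∈ Finset.range (n - 1), kc m * (l i) ^ m)
      + k ^ 2 * (l i) ^ (n - 1)) / (∏ j ∈ Finset.univ.erase i, (l i - l j)) = k ^ 2 := by
    simp only [div_eq_mul_inv, add_mul, Finset.sum_mul]
    rw [Finset.sum_add_distrib]
    have t1 : ∑ i, ∑ m ∈ Finset.range (n - 1),
        kc m * (l i) ^ m * (∏ j ∈ Finset.univ.erase i, (l i - l j))⁻¹ = 0 := by
      rw [Finset.sum_comm]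
      refine Finset.sum_eq_zero fun m hm => ?_
      have hm' : m < n - 1 := Finset.mem_range.1 hm
      have : ∑ i, kc m * (l i) ^ m * (∏ j ∈ Finset.univ.erase i, (l i - l j))⁻¹
          = kc m * ∑ i, (l i) ^ m * (∏ j ∈ Finset.univ.erase i, (l i - l j))⁻¹ := by
        rw [Finset.mul_sum]; exact Finset.sum_congr rfl fun i _ => by ring
      rw [this, lag_monomial l hlinj m (lt_of_lt_of_le hm' (Nat.sub_le n 1)),
        if_neg (Nat.ne_of_lt hm'), mul_zero]
    have t2 : ∑ i, k ^ 2 * (l i) ^ (n - 1)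
        * (∏ j ∈ Finset.univ.erase i, (l i - l j))⁻¹ = k ^ 2 := by
      have : ∑ i, k ^ 2 * (l i) ^ (n - 1) * (∏ j ∈ Finset.univ.erase i, (l i - l j))⁻¹
          = k ^ 2 * ∑ i, (l i) ^ (n - 1) * (∏ j ∈ Finset.univ.erase i, (l i - l j))⁻¹ := by
        rw [Finset.mul_sum]; exact Finset.sum_congr rfl fun i _ => by ring
      rw [this, lag_monomial l hlinj (n - 1) (Nat.sub_lt (by omega) one_pos), if_pos rfl,
        mul_one]
    rw [t1, t2, zero_add]
  -- assembly
  simp only [key]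
  rw [← Finset.mul_sum, inv_mul_cancel_left₀ (ne_of_gt hhl_pos)]
  have split : ∀ i : Fin n,
      -((((∑ m ∈ Finset.range (n - 1), kc m * (l i) ^ m)
          + k ^ 2 * (l i) ^ (n - 1) - v i (l i))
            / ∏ j ∈ Finset.univ.erase i, (l i - l j)) * ψ l)
      = -(((∑ m ∈ Finset.range (n - 1), kc m * (l i) ^ m) + k ^ 2 * (l i) ^ (n - 1))
            / (∏ j ∈ Finset.univ.erase i, (l i - l j)) * ψ l)
        + (v i (l i) / ∏ j ∈ Finset.univ.erase i, (l i - l j)) * ψ l := by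
    intro i; rw [sub_div]; ring
  simp only [split]
  rw [Finset.sum_add_distrib]
  have e1 : ∑ i : Fin n, -(((∑ m ∈ Finset.range (n - 1), kc m * (l i) ^ m)
        + k ^ 2 * (l i) ^ (n - 1)) / (∏ j ∈ Finset.univ.erase i, (l i - l j)) * ψ l)
      = -(k ^ 2 * ψ l) := by
    rw [Finset.sum_neg_distrib, ← Finset.sum_mul, hsum]
  have e2 : ∑ i : Fin n, (v i (l i) / ∏ j ∈ Finset.univ.erase i, (l i - l j)) * ψ l
      = V l * ψ l := by
    rw [← Finset.sum_mul, ← hV]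
  rw [e1, e2]
  ring
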